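/- Let P be a simple polygon, Π a connected curve contained in P intersecting every nonredundant cut of P, Q the subpolygon of P obtained by cutting P along all nonredundant cuts, and v_i a reflex vertex of Q with adjacent vertex t_{ij} and associated cut l_{ij} of Q generated by the edge t_{ij}v_i. If l_{ij} does not intersect any nonredundant cut of P and there exist nonredundant cuts of P whose pockets lie inside Pocket(l_{ij}) as well as a nonredundant cut of P whose pocket does not lie inside Pocket(l_{ij}), then Π intersects the segment l_{ij}. -/

import Mathlib

open Set

noncomputable section

/-- The Euclidean plane. -/
abbrev E2 := EuclideanSpace ℝ (Fin 2)

/-- A simple polygon in the plane, given by its cyclic sequence of vertices.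
Adjacent edges meet exactly at their common vertex, and non-adjacent edges
are disjoint, so the boundary is a simple closed polygonal curve. -/
structure SimplePolygon where
  n : ℕ
  three_le : 3 ≤ n
  vtx : ZMod n → E2
  inj : Function.Injective vtx
  adj_edges : ∀ i : ZMod n,
    segment ℝ (vtx i) (vtx (i + 1)) ∩ segment ℝ (vtx (i + 1)) (vtx (i + 2)) = {vtx (i + 1)}
  nonadj_edges : ∀ i j : ZMod n, i ≠ j → i + 1 ≠ j → j + 1 ≠ i →
    segment ℝ (vtx i) (vtx (i + 1)) ∩ segment ℝ (vtx j) (vtx (j + 1)) = ∅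

namespace SimplePolygon

variable (P : SimplePolygon)

/-- The boundary `∂P`: the union of the edges. -/
def boundary : Set E2 := ⋃ i : ZMod P.n, segment ℝ (P.vtx i) (P.vtx (i + 1))

/-- The compact region bounded by `∂P`: the boundary together with all points of the
bounded connected components of its complement. -/
def region : Set E2 :=
  P.boundary ∪ {x | x ∉ P.boundary ∧ Bornology.IsBounded (connectedComponentIn P.boundaryᶜ x)}

/-- `x` sees `y` (in `P`) if the closed segment `[x,y]` is contained in `P`. -/
def Visible (x y : E2) : Prop := segment ℝ x y ⊆ P.region

/-- The vertex `vtx i` is reflex: its internal angle is strictly larger than `π`, i.e.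
near the vertex the midpoint of two points at equal small parameter along the two
incident edges lies outside the region. -/
def IsReflex (i : ZMod P.n) : Prop :=
  ∃ ε₀ > (0 : ℝ), ∀ ε ∈ Set.Ioo (0 : ℝ) ε₀,
    midpoint ℝ (P.vtx i + ε • (P.vtx (i - 1) - P.vtx i))
               (P.vtx i + ε • (P.vtx (i + 1) - P.vtx i)) ∉ P.region

/-- `P` is star-shaped if a single point of `P` sees all of `P`. -/
def IsStarShaped : Prop := ∃ x ∈ P.region, ∀ y ∈ P.region, P.Visible x y

/-- A visibility path: a connected curve inside `P` from which every point of `P`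
is visible. -/
def IsVisibilityPath (Pth : Set E2) : Prop :=
  IsConnected Pth ∧ Pth ⊆ P.region ∧ ∀ x ∈ P.region, ∃ p ∈ Pth, P.Visible x p

/-- The pocket, inside `P`, determined by a cut segment `s` on the side of the point `u`:
the closure of the connected component of `P \ s` containing `u`, together with `s`. -/
def pocketOfSeg (s : Set E2) (u : E2) : Set E2 :=
  closure (connectedComponentIn (P.region \ s) u) ∪ s

end SimplePolygon

/-- A cut of a simple polygon `P`: for a reflex vertex `v = vtx i` with adjacent
vertex `u = vtx j`, the segment from `v` to the closest point `w` of `∂P` hit by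
the ray from `v` in the direction from `u` to `v`. -/
structure SimplePolygon.Cut (P : SimplePolygon) where
  i : ZMod P.n
  j : ZMod P.n
  adj : j = i + 1 ∨ j = i - 1
  reflex : P.IsReflex i
  t : ℝ
  t_pos : 0 < t
  hits : P.vtx i + t • (P.vtx i - P.vtx j) ∈ P.boundary
  first_hit : ∀ s ∈ Set.Ioo (0 : ℝ) t, P.vtx i + s • (P.vtx i - P.vtx j) ∉ P.boundary
  inside : segment ℝ (P.vtx i) (P.vtx i + t • (P.vtx i - P.vtx j)) ⊆ P.region

namespace SimplePolygon.Cut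

variable {P : SimplePolygon} (C : P.Cut)

/-- The reflex vertex generating the cut. -/
def v : E2 := P.vtx C.i

/-- The adjacent vertex `u`; the edge `u v` is the generator of the cut. -/
def u : E2 := P.vtx C.j

/-- The other endpoint of the cut, on `∂P`. -/
def w : E2 := P.vtx C.i + C.t • (P.vtx C.i - P.vtx C.j)

/-- The cut as a segment. -/
def seg : Set E2 := segment ℝ C.v C.w

/-- `Pocket(C)`: the part of `P` cut off by `C` that contains the generator vertex `u`. -/
def pocket : Set E2 := P.pocketOfSeg C.seg C.u

/-- A cut is redundant if the pocket of some cut is strictly contained in its pocket. -/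
def Redundant : Prop := ∃ C' : P.Cut, C'.pocket ⊂ C.pocket

/-- A nonredundant (essential) cut. -/
def Nonredundant : Prop := ¬ C.Redundant

/-- `x` is a vertex of the polygon `Pocket(C)`: either the endpoint `w` of the cut, or a
vertex of `P` belonging to the pocket. -/
def PocketVertex (x : E2) : Prop :=
  x = C.w ∨ ∃ k : ZMod P.n, P.vtx k = x ∧ x ∈ C.pocket

end SimplePolygon.Cut

/-- Length of a polygonal path given by its list of vertices. -/
def polyLength (l : List E2) : ℝ := ((l.zip l.tail).map fun p => dist p.1 p.2).sum

namespace SimplePolygon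

variable (P : SimplePolygon)

/-- A polygonal path inside `P`: a nonempty list of points with each consecutive
segment contained in `P`. -/
def IsPolyPathIn (l : List E2) : Prop :=
  l ≠ [] ∧ List.Chain' (fun a b => segment ℝ a b ⊆ P.region) l

/-- `l` is a shortest Euclidean (polygonal) path inside `P` from `x` to the set `S`. -/
def IsGeodesicTo (x : E2) (S : Set E2) (l : List E2) : Prop :=
  P.IsPolyPathIn l ∧ l.head? = some x ∧ (∃ y ∈ S, l.getLast? = some y) ∧
  ∀ m : List E2, P.IsPolyPathIn m → m.head? = some x →
    (∃ y ∈ S, m.getLast? = some y) → polyLength l ≤ polyLength m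

/-- The subpolygon `Q` of `P` obtained by cutting `P` along all nonredundant cuts:
the closure of `P` minus the union of the pockets of all nonredundant cuts. -/
def core : Set E2 :=
  closure (P.region \ ⋃ C : {C : P.Cut // C.Nonredundant}, (C : P.Cut).pocket)

end SimplePolygon

/-- The planar cross product. -/
def cross2 (a b : E2) : ℝ := a 0 * b 1 - a 1 * b 0

/-- A polygonal chain all of whose turns have the sign `s` (a convex chain bending
consistently to one side). -/
def ConvexChain (s : ℝ) (l : List E2) : Prop :=
  ∀ p q r : E2, [p, q, r] <:+: l → 0 ≤ s * cross2 (q - p) (r - q)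

section AuxLemmas

open SimplePolygon Bornology

/-- A set between a `connectedComponentIn` and the ambient set that is in its closure
is still in the component. -/
lemma mem_connectedComponentIn_of_mem_closure {X : Type*} [TopologicalSpace X]
    {s : Set X} {u x : X} (hu : u ∈ s) (hx : x ∈ s)
    (hcl : x ∈ closure (connectedComponentIn s u)) : x ∈ connectedComponentIn s u := by
  have hT : IsPreconnected (insert x (connectedComponentIn s u)) :=
    isPreconnected_connectedComponentIn.subset_closure (subset_insert _ _)
      (insert_subset hcl subset_closure)
  have h2 : insert x (connectedComponentIn s u) ⊆ connectedComponentIn s u :=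
    hT.subset_connectedComponentIn (mem_insert_of_mem _ (mem_connectedComponentIn hu))
      (insert_subset hx (connectedComponentIn_subset _ _))
  exact h2 (mem_insert _ _)

lemma segment_isClosed (x y : E2) : IsClosed (segment ℝ x y) := by
  have : IsCompact (segment ℝ x y) := by
    rw [segment_eq_image']
    exact isCompact_Icc.image (continuous_const.add (continuous_id.smul continuous_const))
  exact this.isClosed

namespace SimplePolygon

variable (P : SimplePolygon)

lemma neZero_n : NeZero P.n := ⟨by have := P.three_le; omega⟩

lemma one_ne_zero' : (1 : ZMod P.n) ≠ 0 := by
  haveI : Fact (1 < P.n) := ⟨by have := P.three_le; omega⟩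
  exact one_ne_zero

lemma vtx_mem_boundary (k : ZMod P.n) : P.vtx k ∈ P.boundary :=
  Set.mem_iUnion.mpr ⟨k, left_mem_segment _ _ _⟩

lemma boundary_subset_region : P.boundary ⊆ P.region := Set.subset_union_left

lemma isClosed_boundary : IsClosed P.boundary := by
  haveI := P.neZero_n
  exact isClosed_iUnion_of_finite fun i => segment_isClosed _ _

lemma isClosed_region : IsClosed P.region := by
  rw [← isOpen_compl_iff, isOpen_iff_forall_mem_open]
  intro x hx
  have hxb : x ∉ P.boundary := fun h => hx (Or.inl h)
  have hnb : ¬ IsBounded (connectedComponentIn P.boundaryᶜ x) := fun h => hx (Or.inr ⟨hxb, h⟩)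
  refine ⟨connectedComponentIn P.boundaryᶜ x, ?_,
    P.isClosed_boundary.isOpen_compl.connectedComponentIn, mem_connectedComponentIn hxb⟩
  intro y hy
  have hyb : y ∉ P.boundary := connectedComponentIn_subset _ _ hy
  have heq := connectedComponentIn_eq hy
  rintro (h | ⟨-, h⟩)
  · exact hyb h
  · exact hnb (heq ▸ h)

lemma isOpen_region_diff_boundary : IsOpen (P.region \ P.boundary) := by
  rw [isOpen_iff_forall_mem_open]
  rintro x ⟨hxr, hxb⟩
  have hbd : IsBounded (connectedComponentIn P.boundaryᶜ x) := by
    rcases hxr with h | ⟨-, h⟩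
    · exact absurd h hxb
    · exact h
  refine ⟨connectedComponentIn P.boundaryᶜ x, ?_,
    P.isClosed_boundary.isOpen_compl.connectedComponentIn, mem_connectedComponentIn hxb⟩
  intro y hy
  have hyb : y ∉ P.boundary := connectedComponentIn_subset _ _ hy
  exact ⟨Or.inr ⟨hyb, (connectedComponentIn_eq hy) ▸ hbd⟩, hyb⟩

lemma core_subset_region : P.core ⊆ P.region :=
  closure_minimal Set.diff_subset P.isClosed_region

end SimplePolygon

namespace SimplePolygon.Cut

variable {P : SimplePolygon} (C : P.Cut)

lemma i_ne_j : C.i ≠ C.j := by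
  rcases C.adj with h | h <;> rw [h] <;> intro hc
  · exact P.one_ne_zero' (by linear_combination -hc)
  · exact P.one_ne_zero' (by linear_combination hc)

lemma v_ne_u : C.v ≠ C.u := fun h => C.i_ne_j (P.inj h)

lemma d_ne_zero : C.v - C.u ≠ 0 := sub_ne_zero.mpr C.v_ne_u

lemma seg_def : C.seg = segment ℝ C.v C.w := rfl

lemma seg_subset_region : C.seg ⊆ P.region := C.inside

lemma w_sub_v : C.w - C.v = C.t • (C.v - C.u) := by
  show C.v + C.t • (C.v - C.u) - C.v = C.t • (C.v - C.u)
  abel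

lemma w_ne_v : C.w ≠ C.v := by
  intro h
  have h0 : C.t • (C.v - C.u) = 0 := by rw [← C.w_sub_v, h, sub_self]
  rcases smul_eq_zero.mp h0 with h1 | h1
  · exact C.t_pos.ne' h1
  · exact C.d_ne_zero h1

lemma mem_seg {x : E2} (hx : x ∈ C.seg) : ∃ s : ℝ, 0 ≤ s ∧ x = C.v + s • (C.v - C.u) := by
  rw [seg_def, segment_eq_image'] at hx
  obtain ⟨θ, hθ, rfl⟩ := hx
  refine ⟨θ * C.t, mul_nonneg hθ.1 C.t_pos.le, ?_⟩
  show C.v + θ • (C.w - C.v) = C.v + (θ * C.t) • (C.v - C.u)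
  rw [C.w_sub_v, smul_smul]

lemma u_notMem_seg : C.u ∉ C.seg := by
  intro h
  obtain ⟨s, hs, he⟩ := C.mem_seg h
  have h0 : (1 + s) • (C.v - C.u) = 0 := by
    have : (1 + s) • (C.v - C.u) = (C.v + s • (C.v - C.u)) - C.u := by module
    rw [this, ← he, sub_self]
  rcases smul_eq_zero.mp h0 with h1 | h1
  · nlinarith
  · exact C.d_ne_zero h1

lemma v_mem_seg : C.v ∈ C.seg := left_mem_segment _ _ _

lemma edge_subset_boundary : segment ℝ C.u C.v ⊆ P.boundary := by
  rcases C.adj with h | h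
  · have h1 : C.u = P.vtx (C.i + 1) := by show P.vtx C.j = _; rw [h]
    have h2 : C.v = P.vtx C.i := rfl
    rw [segment_symm, h1, h2]
    exact Set.subset_iUnion (fun i => segment ℝ (P.vtx i) (P.vtx (i + 1))) C.i
  · have h1 : C.u = P.vtx (C.i - 1) := by show P.vtx C.j = _; rw [h]
    have h2 : C.v = P.vtx (C.i - 1 + 1) := by rw [sub_add_cancel]; rfl
    rw [h1, h2]
    exact Set.subset_iUnion (fun i => segment ℝ (P.vtx i) (P.vtx (i + 1))) (C.i - 1)

lemma seg_subset_pocket : C.seg ⊆ C.pocket := Set.subset_union_right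

/-- A connected set containing `u`, avoiding the cut segment, whose closure contains `v`. -/
lemma half_edge : ∃ Eset : Set E2, IsPreconnected Eset ∧ C.u ∈ Eset ∧ C.v ∈ closure Eset ∧
    Eset ⊆ P.region \ C.seg := by
  set f : ℝ → E2 := fun r => C.u + r • (C.v - C.u) with hf
  have hfc : Continuous f := continuous_const.add (continuous_id.smul continuous_const)
  refine ⟨f '' Set.Ico 0 1, (isPreconnected_Ico).image f hfc.continuousOn, ⟨0, by
    simp [hf], by simp [hf]⟩, ?_, ?_⟩
  · have h1 : f 1 = C.v := by simp [hf]
    have : f 1 ∈ closure (f '' Set.Ico 0 1) := by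
      refine map_mem_closure hfc ?_ (Set.mapsTo_image _ _)
      rw [closure_Ico (zero_ne_one)]
      exact ⟨zero_le_one, le_refl 1⟩
    rwa [h1] at this
  · rintro x ⟨r, hr, rfl⟩
    constructor
    · apply P.boundary_subset_region
      apply C.edge_subset_boundary
      rw [segment_eq_image']
      exact ⟨r, ⟨hr.1, hr.2.le⟩, rfl⟩
    · intro hmem
      obtain ⟨s, hs, he⟩ := C.mem_seg hmem
      have h0 : (r - 1 - s) • (C.v - C.u) = 0 := by
        have : (r - 1 - s) • (C.v - C.u) = (C.u + r • (C.v - C.u)) - (C.v + s • (C.v - C.u)) := by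
          module
        rw [this, ← he, sub_self]
      rcases smul_eq_zero.mp h0 with h1 | h1
      · linarith [hr.2]
      · exact C.d_ne_zero h1

end SimplePolygon.Cut

end AuxLemmas


section KeyLemma

open SimplePolygon Bornology

/-- A point of the core which is not a vertex of `P` cannot lie in the pocket component
of a nonredundant cut. -/
lemma core_not_in_pocket_component (P : SimplePolygon) (C : P.Cut) (hC : C.Nonredundant)
    {z : E2} (hz : z ∈ P.core) (hzv : ∀ k : ZMod P.n, P.vtx k ≠ z)
    (hzM : z ∈ connectedComponentIn (P.region \ C.seg) C.u) : False := by
  haveI := P.neZero_n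
  set F := P.region \ C.seg with hF
  set M := connectedComponentIn F C.u with hM
  have hMeq : M = connectedComponentIn F z := connectedComponentIn_eq hzM
  have hzF : z ∈ F := connectedComponentIn_subset _ _ hzM
  have hzr : z ∈ P.region := hzF.1
  have hzs : z ∉ C.seg := hzF.2
  have hz' : z ∈ closure (P.region \
      ⋃ D : {D : P.Cut // D.Nonredundant}, (D : P.Cut).pocket) := hz
  have hMU : M ⊆ ⋃ D : {D : P.Cut // D.Nonredundant}, (D : P.Cut).pocket := by
    have h1 : M ⊆ C.pocket := subset_trans subset_closure Set.subset_union_left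
    exact h1.trans
      (Set.subset_iUnion (fun D : {D : P.Cut // D.Nonredundant} => (D : P.Cut).pocket) ⟨C, hC⟩)
  obtain ⟨ε₂, hε₂pos, hε₂⟩ :=
    Metric.isOpen_iff.mp (segment_isClosed C.v C.w).isOpen_compl z hzs
  by_cases hzb : z ∈ P.boundary
  case neg =>
    obtain ⟨ε₁, hε₁pos, hε₁⟩ := Metric.isOpen_iff.mp P.isOpen_region_diff_boundary z ⟨hzr, hzb⟩
    have hεpos : 0 < min ε₁ ε₂ := lt_min hε₁pos hε₂pos
    have hBM : Metric.ball z (min ε₁ ε₂) ⊆ M := by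
      rw [hMeq]
      refine (convex_ball z _).isPreconnected.subset_connectedComponentIn
        (Metric.mem_ball_self hεpos) ?_
      intro y hy
      exact ⟨(hε₁ ((Metric.ball_subset_ball (min_le_left _ _)) hy)).1,
        hε₂ ((Metric.ball_subset_ball (min_le_right _ _)) hy)⟩
    obtain ⟨w, hwU, hwd⟩ := Metric.mem_closure_iff.mp hz' _ hεpos
    exact hwU.2 (hMU (hBM (by rwa [Metric.mem_ball, dist_comm])))
  case pos =>
    obtain ⟨k, hk⟩ := Set.mem_iUnion.mp hzb
    rw [segment_eq_image'] at hk
    obtain ⟨θ, hθIcc, hzeq⟩ := hk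
    set a := P.vtx k with ha
    set b := P.vtx (k + 1) with hb
    have hab : a ≠ b := by
      intro h
      have h2 := P.inj h
      exact P.one_ne_zero' (by linear_combination -h2)
    have hba : b - a ≠ 0 := sub_ne_zero.mpr (Ne.symm hab)
    have hθ0 : 0 < θ := by
      rcases lt_or_eq_of_le hθIcc.1 with h | h
      · exact h
      · exfalso
        apply hzv k
        rw [← hzeq, ← h]
        simp [ha]
    have hθ1 : θ < 1 := by
      rcases lt_or_eq_of_le hθIcc.2 with h | h
      · exact h
      · exfalso
        apply hzv (k + 1)
        rw [← hzeq, h]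
        show b = a + (1 : ℝ) • (b - a)
        rw [one_smul, add_sub_cancel]
    have hzk : z ∈ segment ℝ a b := by
      rw [segment_eq_image']
      exact ⟨θ, hθIcc, hzeq⟩
    have hzL : ∃ s : ℝ, z = a + s • (b - a) := ⟨θ, hzeq.symm⟩
    have hε₃pos : 0 < min θ (1 - θ) * ‖b - a‖ :=
      mul_pos (lt_min hθ0 (by linarith)) (norm_pos_iff.mpr hba)
    have hLseg : ∀ y : E2, (∃ s : ℝ, y = a + s • (b - a)) →
        dist y z < min θ (1 - θ) * ‖b - a‖ → y ∈ segment ℝ a b := by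
      rintro y ⟨s, rfl⟩ hy
      have hdiff : a + s • (b - a) - z = (s - θ) • (b - a) := by
        rw [← hzeq]; module
      rw [dist_eq_norm, hdiff, norm_smul, Real.norm_eq_abs] at hy
      have habs : |s - θ| < min θ (1 - θ) :=
        lt_of_mul_lt_mul_right hy (norm_nonneg _)
      rw [segment_eq_image']
      refine ⟨s, ⟨?_, ?_⟩, rfl⟩
      · have h1 := (abs_lt.mp habs).1
        have h2 := min_le_left θ (1 - θ)
        linarith
      · have h1 := (abs_lt.mp habs).2
        have h2 := min_le_right θ (1 - θ)
        linarith
    -- avoid the other edges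
    have hGclosed : IsClosed (⋃ l ∈ {l : ZMod P.n | l ≠ k}, segment ℝ (P.vtx l) (P.vtx (l + 1))) :=
      (Set.toFinite _).isClosed_biUnion (fun l _ => segment_isClosed _ _)
    have hzG : z ∉ ⋃ l ∈ {l : ZMod P.n | l ≠ k}, segment ℝ (P.vtx l) (P.vtx (l + 1)) := by
      intro hmem
      rw [Set.mem_iUnion₂] at hmem
      obtain ⟨l, hlk, hzl⟩ := hmem
      by_cases h1 : l = k + 1
      · subst h1
        have h2 := P.adj_edges k
        have h3 : z ∈ segment ℝ (P.vtx k) (P.vtx (k + 1)) ∩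
            segment ℝ (P.vtx (k + 1)) (P.vtx (k + 2)) := by
          refine ⟨hzk, ?_⟩
          have he : k + 2 = k + 1 + 1 := by ring
          rw [he]
          exact hzl
        rw [h2] at h3
        exact hzv (k + 1) h3.symm
      · by_cases h2 : k = l + 1
        · have h3 := P.adj_edges l
          have h4 : z ∈ segment ℝ (P.vtx l) (P.vtx (l + 1)) ∩
              segment ℝ (P.vtx (l + 1)) (P.vtx (l + 2)) := by
            refine ⟨hzl, ?_⟩
            have he1 : l + 1 = k := h2.symm
            have he2 : l + 2 = k + 1 := by rw [h2]; ring
            rw [he1, he2]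
            exact hzk
          rw [h3] at h4
          exact hzv (l + 1) h4.symm
        · have h4 := P.nonadj_edges k l (fun h => hlk h.symm) (fun h => h1 h.symm)
            (fun h => h2 h.symm)
          have h5 : z ∈ segment ℝ (P.vtx k) (P.vtx (k + 1)) ∩
              segment ℝ (P.vtx l) (P.vtx (l + 1)) := ⟨hzk, hzl⟩
          rw [h4] at h5
          exact h5
    obtain ⟨ε₄, hε₄pos, hε₄⟩ := Metric.isOpen_iff.mp hGclosed.isOpen_compl z hzG
    set ε := min (min ε₂ (min θ (1 - θ) * ‖b - a‖)) ε₄ with hε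
    have hεpos : 0 < ε := lt_min (lt_min hε₂pos hε₃pos) hε₄pos
    have hBseg : ∀ y ∈ Metric.ball z ε, y ∉ C.seg := fun y hy =>
      hε₂ (Metric.ball_subset_ball ((min_le_left _ _).trans (min_le_left _ _)) hy)
    have hBG : ∀ y ∈ Metric.ball z ε,
        y ∉ ⋃ l ∈ {l : ZMod P.n | l ≠ k}, segment ℝ (P.vtx l) (P.vtx (l + 1)) := fun y hy =>
      hε₄ (Metric.ball_subset_ball (min_le_right _ _) hy)
    have hBL : ∀ y ∈ Metric.ball z ε, (∃ s : ℝ, y = a + s • (b - a)) → y ∈ segment ℝ a b := by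
      intro y hy hyL
      refine hLseg y hyL ?_
      have := Metric.mem_ball.mp hy
      calc dist y z < ε := this
        _ ≤ min ε₂ (min θ (1 - θ) * ‖b - a‖) := min_le_left _ _
        _ ≤ min θ (1 - θ) * ‖b - a‖ := min_le_right _ _
    have hBbd : ∀ y ∈ Metric.ball z ε, y ∈ P.boundary → y ∈ segment ℝ a b := by
      intro y hyB hybd
      obtain ⟨l, hl⟩ := Set.mem_iUnion.mp hybd
      by_cases hlk : l = k
      · subst hlk
        exact hl
      · exact absurd (Set.mem_iUnion₂.mpr ⟨l, hlk, hl⟩) (hBG y hyB)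
    have hsegL : ∀ y ∈ segment ℝ a b, ∃ s : ℝ, y = a + s • (b - a) := by
      intro y hy
      rw [segment_eq_image'] at hy
      obtain ⟨s, _, rfl⟩ := hy
      exact ⟨s, rfl⟩
    have hedgeM : Metric.ball z ε ∩ segment ℝ a b ⊆ M := by
      rw [hMeq]
      refine ((convex_ball z ε).inter (convex_segment a b)).isPreconnected.subset_connectedComponentIn
        ⟨Metric.mem_ball_self hεpos, hzk⟩ ?_
      rintro y ⟨hyB, hyseg⟩
      refine ⟨P.boundary_subset_region ?_, hBseg y hyB⟩
      exact Set.mem_iUnion.mpr ⟨k, hyseg⟩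
    obtain ⟨w, hwmem, hwd⟩ := Metric.mem_closure_iff.mp hz' ε hεpos
    have hwB : w ∈ Metric.ball z ε := by rwa [Metric.mem_ball, dist_comm]
    have hwnM : w ∉ M := fun h => hwmem.2 (hMU h)
    by_cases hwbd : w ∈ P.boundary
    · exact hwnM (hedgeM ⟨hwB, hBbd w hwB hwbd⟩)
    · have hwnL : ¬ ∃ s : ℝ, w = a + s • (b - a) := by
        intro h
        exact hwbd (Set.mem_iUnion.mpr ⟨k, hBL w hwB h⟩)
      set f : ℝ → E2 := fun r => w + r • (z - w) with hfdef
      have hfc : Continuous f := continuous_const.add (continuous_id.smul continuous_const)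
      have hS'B : f '' Set.Ico 0 1 ⊆ Metric.ball z ε := by
        rintro x ⟨r, hr, rfl⟩
        have h1 : f r - z = (1 - r) • (w - z) := by
          simp only [hfdef]
          module
        rw [Metric.mem_ball, dist_eq_norm, h1, norm_smul, Real.norm_eq_abs,
          abs_of_nonneg (by linarith [hr.2] : (0 : ℝ) ≤ 1 - r)]
        have h2 : ‖w - z‖ < ε := by rwa [Metric.mem_ball, dist_eq_norm] at hwB
        nlinarith [norm_nonneg (w - z), hr.1, hr.2]
      have hS'L : ∀ x ∈ f '' Set.Ico 0 1, ¬ ∃ s : ℝ, x = a + s • (b - a) := by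
        rintro x ⟨r, hr, rfl⟩ ⟨s₁, hs₁⟩
        apply hwnL
        have hrne : (1 : ℝ) - r ≠ 0 := by
          have := hr.2
          intro h
          linarith [hr.2]
        refine ⟨(s₁ - r * θ) / (1 - r), ?_⟩
        have hkey : (1 - r) • w = (1 - r) • (a + ((s₁ - r * θ) / (1 - r)) • (b - a)) := by
          have h1 : (1 - r) • w = f r - r • z := by
            simp only [hfdef]
            module
          have h2 : (1 - r) • (a + ((s₁ - r * θ) / (1 - r)) • (b - a))
              = (1 - r) • a + ((1 - r) * ((s₁ - r * θ) / (1 - r))) • (b - a) := by module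
          have h3 : (1 - r) * ((s₁ - r * θ) / (1 - r)) = s₁ - r * θ := by field_simp
          rw [h1, h2, h3, hs₁, ← hzeq]
          module
        exact smul_right_injective E2 hrne hkey
      have hS'bd : ∀ x ∈ f '' Set.Ico 0 1, x ∉ P.boundary := fun x hx hbd =>
        hS'L x hx (hsegL x (hBbd x (hS'B hx) hbd))
      have hwreg : w ∈ P.region := hwmem.1
      have hwbdd : IsBounded (connectedComponentIn P.boundaryᶜ w) := by
        rcases hwreg with h | ⟨-, h⟩
        · exact absurd h hwbd
        · exact h
      have hwS' : w ∈ f '' Set.Ico 0 1 :=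
        ⟨0, ⟨le_refl 0, zero_lt_one⟩, by simp [hfdef]⟩
      have hS'cc : f '' Set.Ico 0 1 ⊆ connectedComponentIn P.boundaryᶜ w := by
        refine (isPreconnected_Ico.image f hfc.continuousOn).subset_connectedComponentIn
          hwS' ?_
        exact fun x hx => hS'bd x hx
      have hS'reg : f '' Set.Ico 0 1 ⊆ P.region := by
        intro x hx
        exact Or.inr ⟨hS'bd x hx, (connectedComponentIn_eq (hS'cc hx)) ▸ hwbdd⟩
      have hzS' : z ∈ closure (f '' Set.Ico 0 1) := by
        have h1 : f 1 = z := by simp [hfdef]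
        have h2 : (1 : ℝ) ∈ closure (Set.Ico (0 : ℝ) 1) := by
          rw [closure_Ico (zero_ne_one)]
          exact ⟨zero_le_one, le_refl 1⟩
        have := map_mem_closure hfc h2 (Set.mapsTo_image f (Set.Ico 0 1))
        rwa [h1] at this
      have hSM : insert z (f '' Set.Ico 0 1) ⊆ M := by
        rw [hMeq]
        refine IsPreconnected.subset_connectedComponentIn ?_ (Set.mem_insert _ _) ?_
        · exact (isPreconnected_Ico.image f hfc.continuousOn).subset_closure
            (Set.subset_insert _ _) (Set.insert_subset hzS' subset_closure)
        · refine Set.insert_subset hzF ?_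
          intro x hx
          exact ⟨hS'reg hx, hBseg x (hS'B hx)⟩
      exact hwnM (hSM (Set.mem_insert_of_mem _ hwS'))

end KeyLemma


/-- Let `Q = P.core` be realized as a simple polygon `R`, let `Pth`
be a connected curve inside `P` intersecting every nonredundant cut of `P`, and let
`C'` be a cut of `R`.  If the segment `C'` intersects no nonredundant cut of `P`,
some nonredundant cut of `P` has its pocket inside the pocket (in `P`) of `C'`, and
some nonredundant cut of `P` has its pocket not inside it, then `Pth` intersects the
segment `C'`. -/
theorem path_crosses_core_cut
    (P : SimplePolygon) (R : SimplePolygon) (hR : R.region = P.core)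
    (Pth : Set E2) (hsub : Pth ⊆ P.region) (hconn : IsConnected Pth)
    (hcuts : ∀ C : P.Cut, C.Nonredundant → (Pth ∩ C.seg).Nonempty)
    (C' : R.Cut)
    (hmiss : ∀ C : P.Cut, C.Nonredundant → C.seg ∩ C'.seg = ∅)
    (hin : ∃ C : P.Cut, C.Nonredundant ∧ C.pocket ⊆ P.pocketOfSeg C'.seg C'.u)
    (hout : ∃ C : P.Cut, C.Nonredundant ∧ ¬ C.pocket ⊆ P.pocketOfSeg C'.seg C'.u) :
    (Pth ∩ C'.seg).Nonempty := by
  classical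
  haveI := P.neZero_n
  by_contra hne
  have hPthC : Pth ∩ C'.seg = ∅ := Set.not_nonempty_iff_eq_empty.mp hne
  obtain ⟨Cin, hCin, hinsub⟩ := hin
  obtain ⟨Cout, hCout, houtsub⟩ := hout
  set s := P.region \ C'.seg with hs
  set K := connectedComponentIn s C'.u with hK
  have hsegR : C'.seg ⊆ P.core := by
    have h := C'.seg_subset_region
    rwa [hR] at h
  have hu'r : C'.u ∈ P.region := by
    have h1 : C'.u ∈ R.region := R.boundary_subset_region (R.vtx_mem_boundary C'.j)
    rw [hR] at h1
    exact P.core_subset_region h1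
  have hu's : C'.u ∈ s := ⟨hu'r, C'.u_notMem_seg⟩
  obtain ⟨p, hpPth, hpseg⟩ := hcuts Cin hCin
  have hpnot : p ∉ C'.seg := fun h =>
    Set.eq_empty_iff_forall_notMem.mp (hmiss Cin hCin) p ⟨hpseg, h⟩
  have hps : p ∈ s := ⟨hsub hpPth, hpnot⟩
  have hpcl : p ∈ closure K := by
    have h1 : p ∈ P.pocketOfSeg C'.seg C'.u := hinsub (Cin.seg_subset_pocket hpseg)
    rcases h1 with h | h
    · exact h
    · exact absurd h hpnot
  have hpK : p ∈ K := mem_connectedComponentIn_of_mem_closure hu's hps hpcl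
  have hPthK : Pth ⊆ K := by
    have h1 : Pth ⊆ s := fun x hx =>
      ⟨hsub hx, fun hc => Set.eq_empty_iff_forall_notMem.mp hPthC x ⟨hx, hc⟩⟩
    have h2 := hconn.isPreconnected.subset_connectedComponentIn hpPth h1
    rw [← connectedComponentIn_eq hpK] at h2
    exact h2
  obtain ⟨q, hqPth, hqseg⟩ := hcuts Cout hCout
  have houtdisj := hmiss Cout hCout
  have hsegout_s : Cout.seg ⊆ s := fun x hx =>
    ⟨Cout.seg_subset_region hx, fun hc =>
      Set.eq_empty_iff_forall_notMem.mp houtdisj x ⟨hx, hc⟩⟩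
  have hqK : q ∈ K := hPthK hqPth
  have hsegoutK : Cout.seg ⊆ K := by
    have h2 := (convex_segment Cout.v Cout.w).isPreconnected.subset_connectedComponentIn
      hqseg hsegout_s
    rw [← connectedComponentIn_eq hqK] at h2
    exact h2
  have hvK : Cout.v ∈ K := hsegoutK Cout.v_mem_seg
  set F := P.region \ Cout.seg with hF
  set M := connectedComponentIn F Cout.u with hM
  obtain ⟨Eset, hEpre, hEu, hEv, hEsub⟩ := Cout.half_edge
  have hEM : Eset ⊆ M := hEpre.subset_connectedComponentIn hEu hEsub
  have hvclM : Cout.v ∈ closure M := closure_mono hEM hEv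
  by_cases hMC : (M ∩ C'.seg).Nonempty
  · -- the core cut would enter the pocket component of `Cout`: impossible
    obtain ⟨z₀, hz₀M, hz₀seg⟩ := hMC
    have hsegM : C'.seg ⊆ M := by
      have h1 : C'.seg ⊆ F := fun x hx =>
        ⟨P.core_subset_region (hsegR hx), fun hc =>
          Set.eq_empty_iff_forall_notMem.mp houtdisj x ⟨hc, hx⟩⟩
      have h2 := (convex_segment C'.v C'.w).isPreconnected.subset_connectedComponentIn
        hz₀seg h1
      rw [← connectedComponentIn_eq hz₀M] at h2
      exact h2
    have hinf : C'.seg.Infinite := by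
      have himg : C'.seg = (fun θ : ℝ => C'.v + θ • (C'.w - C'.v)) '' Set.Icc 0 1 := by
        rw [C'.seg_def, segment_eq_image']
      rw [himg]
      apply Set.Infinite.image
      · intro x _ y _ hxy
        have hxy' : C'.v + x • (C'.w - C'.v) = C'.v + y • (C'.w - C'.v) := hxy
        have h0 : (x - y) • (C'.w - C'.v) = 0 := by
          have he : (x - y) • (C'.w - C'.v) =
              (C'.v + x • (C'.w - C'.v)) - (C'.v + y • (C'.w - C'.v)) := by module
          rw [he, hxy', sub_self]
        rcases smul_eq_zero.mp h0 with h1 | h1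
        · exact sub_eq_zero.mp h1
        · exact absurd h1 (sub_ne_zero.mpr C'.w_ne_v)
      · exact Set.Icc_infinite zero_lt_one
    have hex : (C'.seg \ Set.range P.vtx).Nonempty := by
      by_contra h
      rw [Set.not_nonempty_iff_eq_empty, Set.diff_eq_empty] at h
      exact hinf ((Set.finite_range P.vtx).subset h)
    obtain ⟨z, hzseg, hznv⟩ := hex
    exact core_not_in_pocket_component P Cout hCout (hsegR hzseg)
      (fun k hk => hznv ⟨k, hk⟩) (hsegM hzseg)
  · -- the pocket of `Cout` would be contained in the pocket of `C'`: impossible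
    have hMempty : M ∩ C'.seg = ∅ := Set.not_nonempty_iff_eq_empty.mp hMC
    obtain ⟨x, hxp, hxnp⟩ := Set.not_subset.mp houtsub
    have hxp' : x ∈ closure M ∪ Cout.seg := hxp
    have hxclM : x ∈ closure M := by
      rcases hxp' with h | h
      · exact h
      · exact absurd (Or.inl (subset_closure (hsegoutK h))) hxnp
    have hclosed : IsClosed (closure K ∪ C'.seg) :=
      isClosed_closure.union (segment_isClosed _ _)
    have hxO : x ∈ (closure K ∪ C'.seg)ᶜ := hxnp
    obtain ⟨m, hmO, hmM⟩ := _root_.mem_closure_iff.mp hxclM _ hclosed.isOpen_compl hxO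
    have hMs : M ⊆ s := fun y hy =>
      ⟨(connectedComponentIn_subset F Cout.u hy).1,
        fun hc => Set.eq_empty_iff_forall_notMem.mp hMempty y ⟨hy, hc⟩⟩
    have hvs : Cout.v ∈ s := hsegout_s Cout.v_mem_seg
    have hT : insert Cout.v M ⊆ K := by
      have hpre : IsPreconnected (insert Cout.v M) :=
        isPreconnected_connectedComponentIn.subset_closure (Set.subset_insert _ _)
          (Set.insert_subset hvclM subset_closure)
      have h2 := hpre.subset_connectedComponentIn (Set.mem_insert _ _)
        (Set.insert_subset hvs hMs)
      rw [← connectedComponentIn_eq hvK] at h2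
      exact h2
    exact hmO (Or.inl (subset_closure (hT (Set.mem_insert_of_mem _ hmM))))
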